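/- Let α, β be odd integers, ω ∈ ℤ, η ≥ 0 an integer, and let D̃ = {(0,0)ᵗ, (α,0)ᵗ, (ω, 2^η β)ᵗ, (−α−ω, −2^η β)ᵗ} ⊂ ℤ². Then the zero set of the mask polynomial of D̃ satisfies Z(m_D̃) = Θ₁ ∪ Θ₂ ∪ Θ₃. -/

import Mathlib

open MeasureTheory Matrix Complex
open scoped ENNReal

noncomputable section

/-- The exponential function `x ↦ e^{2πi⟨l,x⟩}` on `Fin n → ℝ`. -/
def expChar {n : ℕ} (l x : Fin n → ℝ) : ℂ :=
  Complex.exp (2 * Real.pi * Complex.I * Complex.ofReal (∑ i, l i * x i))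

/-- `Λ` is an orthogonal set of `μ`: the exponentials `e^{2πi⟨λ,·⟩}`, `λ ∈ Λ`,
form an orthonormal family in `L²(μ)`. -/
def IsOrthogonalSet {n : ℕ} (μ : Measure (Fin n → ℝ)) (Λ : Set (Fin n → ℝ)) : Prop :=
  ∃ b : Λ → Lp ℂ 2 μ,
    (∀ l : Λ, (b l : (Fin n → ℝ) → ℂ) =ᵐ[μ] expChar (l : Fin n → ℝ)) ∧
    Orthonormal ℂ b

/-- `Λ` is a spectrum of `μ`: the exponentials `e^{2πi⟨λ,·⟩}`, `λ ∈ Λ`,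
form an orthonormal basis (orthonormal and total) of `L²(μ)`. -/
def IsSpectrum {n : ℕ} (μ : Measure (Fin n → ℝ)) (Λ : Set (Fin n → ℝ)) : Prop :=
  ∃ b : Λ → Lp ℂ 2 μ,
    (∀ l : Λ, (b l : (Fin n → ℝ) → ℂ) =ᵐ[μ] expChar (l : Fin n → ℝ)) ∧
    Orthonormal ℂ b ∧
    (Submodule.span ℂ (Set.range b)).topologicalClosure = ⊤

/-- `μ` is a spectral measure : some countable `Λ` is a spectrum of `μ`. -/
def IsSpectralMeasure {n : ℕ} (μ : Measure (Fin n → ℝ)) : Prop :=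
  ∃ Λ : Set (Fin n → ℝ), Λ.Countable ∧ IsSpectrum μ Λ

/-- A real matrix is expansive if all of its (complex) eigenvalues have modulus `> 1`. -/
def Expansive {n : ℕ} (M : Matrix (Fin n) (Fin n) ℝ) : Prop :=
  ∀ z : ℂ, (M.map (Complex.ofReal)).charpoly.IsRoot z → 1 < ‖z‖

/-- `μ` is the self-affine measure associated with `(M, D)`: a compactly supported
Borel probability measure satisfying `μ = (1/#D) ∑_{d ∈ D} μ ∘ φ_d⁻¹`,
where `φ_d x = M⁻¹(x + d)`. -/
def IsSelfAffineMeasure {n : ℕ} (M : Matrix (Fin n) (Fin n) ℝ) (D : Finset (Fin n → ℝ))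
    (μ : Measure (Fin n → ℝ)) : Prop :=
  IsProbabilityMeasure μ ∧
  (∃ K : Set (Fin n → ℝ), IsCompact K ∧ μ Kᶜ = 0) ∧
  μ = (D.card : ℝ≥0∞)⁻¹ • ∑ d ∈ D, μ.map (fun x => M⁻¹.mulVec (x + d))

/-- Coordinatewise cast of an integer vector to a real vector. -/
def intCast {n : ℕ} (v : Fin n → ℤ) : Fin n → ℝ := fun i => (v i : ℝ)

/-- The matrix `H = N^{-1/2} (e^{2πi⟨M⁻¹d, s⟩})_{d ∈ D, s ∈ S}`. -/
def hadamardH {n : ℕ} (M : Matrix (Fin n) (Fin n) ℤ) (D S : Finset (Fin n → ℤ)) :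
    Matrix D S ℂ := fun d s =>
  (Real.sqrt (D.card) : ℂ)⁻¹ *
    Complex.exp (2 * Real.pi * Complex.I *
      Complex.ofReal (∑ i, ((M.map (Int.cast : ℤ → ℝ))⁻¹.mulVec (intCast d.1)) i * ((s.1 i : ℝ))))

/-- `(M, D, S)` is a Hadamard triple: `#D = #S` and
`H = N^{-1/2}(e^{2πi⟨M⁻¹d,s⟩})` is unitary. -/
def IsHadamardTriple {n : ℕ} (M : Matrix (Fin n) (Fin n) ℤ) (D S : Finset (Fin n → ℤ)) :
    Prop :=
  D.card = S.card ∧ (hadamardH M D S)ᴴ * hadamardH M D S = 1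

/-- `(M, D)` is admissible: there is `S ⊂ ℤⁿ` such that `(M, D, S)` is a Hadamard triple. -/
def IsAdmissible {n : ℕ} (M : Matrix (Fin n) (Fin n) ℤ) (D : Finset (Fin n → ℤ)) : Prop :=
  ∃ S : Finset (Fin n → ℤ), IsHadamardTriple M D S

/-- The mask polynomial `m_D(x) = (1/#D) ∑_{d∈D} e^{2πi⟨d,x⟩}` of a finite set `D`. -/
def maskPoly {n : ℕ} (D : Finset (Fin n → ℝ)) (x : Fin n → ℝ) : ℂ :=
  (D.card : ℂ)⁻¹ * ∑ d ∈ D, Complex.exp (2 * Real.pi * Complex.I * Complex.ofReal (∑ i, d i * x i))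

/-- The Fourier transform `μ̂(ξ) = ∫ e^{2πi⟨x,ξ⟩} dμ(x)`. -/
def fourierMeasure {n : ℕ} (μ : Measure (Fin n → ℝ)) (ξ : Fin n → ℝ) : ℂ :=
  ∫ x, expChar ξ x ∂μ

/-- The sets `Θ₀, Θ₁, Θ₂, Θ₃` associated with odd integers `α, β`, `ω ∈ ℤ` and `η ≥ 0`:
`Θᵢ = {(2^η(2k+δᵢ)β, (2k'+εᵢ)α − (2k+δᵢ)ω)ᵗ/(2^{η+1}αβ) : k, k' ∈ ℤ}` where
`δᵢ = i % 2` and `εᵢ = i / 2`. -/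
def thetaSet (α β ω : ℤ) (η : ℕ) (i : Fin 4) : Set (Fin 2 → ℝ) :=
  { v | ∃ k k' : ℤ, v = ((2 : ℝ) ^ (η + 1) * (α : ℝ) * (β : ℝ))⁻¹ •
      intCast ![2 ^ η * (2 * k + ((i.val % 2 : ℕ) : ℤ)) * β,
        (2 * k' + ((i.val / 2 : ℕ) : ℤ)) * α - (2 * k + ((i.val % 2 : ℕ) : ℤ)) * ω] }

namespace ZeroSetAux

noncomputable def ee (t : ℝ) : ℂ := Complex.exp (2 * Real.pi * Complex.I * (t:ℂ))

lemma two_pi_I_ne : (2 * (Real.pi:ℂ) * Complex.I) ≠ 0 := by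
  simp [Real.pi_ne_zero, Complex.I_ne_zero, Complex.ofReal_ne_zero]

lemma ee_eq_one_iff (t : ℝ) : ee t = 1 ↔ ∃ n : ℤ, 2*t = 2*n := by
  rw [ee, Complex.exp_eq_one_iff]
  constructor
  · rintro ⟨n, hn⟩
    refine ⟨n, ?_⟩
    have h : (t:ℂ) = (n:ℂ) := by
      apply mul_left_cancel₀ two_pi_I_ne
      linear_combination hn
    have : t = (n:ℝ) := by exact_mod_cast h
    linarith
  · rintro ⟨n, hn⟩
    have ht : t = (n:ℝ) := by linarith
    exact ⟨n, by rw [ht]; push_cast; ring⟩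

lemma ee_eq_neg_one_iff (t : ℝ) : ee t = -1 ↔ ∃ n : ℤ, 2*t = 2*n + 1 := by
  have hpi : Complex.exp ((Real.pi:ℂ) * Complex.I) = -1 := Complex.exp_pi_mul_I
  rw [ee, ← hpi, Complex.exp_eq_exp_iff_exists_int]
  constructor
  · rintro ⟨n, hn⟩
    refine ⟨n, ?_⟩
    have h : (2*t : ℂ) = 2*(n:ℂ) + 1 := by
      apply mul_left_cancel₀ (mul_ne_zero (Complex.ofReal_ne_zero.mpr Real.pi_ne_zero) Complex.I_ne_zero)
      push_cast
      linear_combination hn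
    exact_mod_cast h
  · rintro ⟨n, hn⟩
    refine ⟨n, ?_⟩
    have ht : t = (n:ℝ) + 1/2 := by linarith
    rw [ht]; push_cast; ring

lemma ee_conj (t : ℝ) : (starRingEnd ℂ) (ee t) = ee (-t) := by
  rw [ee, ee, ← Complex.exp_conj]
  congr 1
  simp only [_root_.map_mul, Complex.conj_I, Complex.conj_ofReal, _root_.map_ofNat,
    Complex.ofReal_neg]
  ring

lemma ee_mul (s t : ℝ) : ee s * ee t = ee (s + t) := by
  rw [ee, ee, ee, ← Complex.exp_add]; congr 1; push_cast; ring

lemma ee_zero : ee 0 = 1 := by simp [ee]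

lemma key_cases (u v : ℝ) :
    1 + ee u + ee v + ee (-u - v) = 0 ↔
      (ee u = -1 ∧ ee v = 1) ∨ (ee u = 1 ∧ ee v = -1) ∨ (ee u = -1 ∧ ee v = -1) := by
  have habc : ee (-u - v) * (ee u * ee v) = 1 := by
    rw [ee_mul, ee_mul, show -u - v + (u + v) = 0 by ring, ee_zero]
  constructor
  · intro h
    have hconj : 1 + ee (-u) + ee (-v) + ee u * ee v = 0 := by
      have h' := congrArg (starRingEnd ℂ) h
      simp only [_root_.map_add, _root_.map_one, _root_.map_zero, ee_conj] at h'
      rw [show -(-u - v) = u + v by ring, ← ee_mul] at h'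
      linear_combination h'
    have haa : ee u * ee (-u) = 1 := by rw [ee_mul, show u + -u = 0 by ring, ee_zero]
    have hbb : ee v * ee (-v) = 1 := by rw [ee_mul, show v + -v = 0 by ring, ee_zero]
    have h1 : ee u * ee v + (ee u)^2 * ee v + ee u * (ee v)^2 + 1 = 0 := by
      linear_combination (ee u * ee v) * h - habc
    have h2 : ee u * ee v + ee u + ee v + (ee u)^2 * (ee v)^2 = 0 := by
      linear_combination (ee u * ee v) * hconj - ee v * haa - ee u * hbb
    have h3 : (ee u * ee v - 1) * ((ee u - 1) * (ee v - 1)) = 0 := by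
      linear_combination h2 - h1
    rcases mul_eq_zero.mp h3 with hab | h4
    · have hab' : ee u * ee v = 1 := by linear_combination hab
      have hsum : ee u + ee v + 2 = 0 := by
        linear_combination h1 - (1 + ee u + ee v) * hab'
      have hsq : (ee u + 1)^2 = 0 := by linear_combination ee u * hsum - hab'
      have hav : ee u = -1 := by
        have := (pow_eq_zero_iff two_ne_zero).mp hsq
        linear_combination this
      have hbv : ee v = -1 := by
        rw [hav] at hab'
        linear_combination -hab'
      exact Or.inr (Or.inr ⟨hav, hbv⟩)
    · rcases mul_eq_zero.mp h4 with ha1 | hb1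
      · have hav : ee u = 1 := by linear_combination ha1
        rw [hav] at h1
        have hsq : (ee v + 1)^2 = 0 := by linear_combination h1
        have hbv : ee v = -1 := by
          have := (pow_eq_zero_iff two_ne_zero).mp hsq
          linear_combination this
        exact Or.inr (Or.inl ⟨hav, hbv⟩)
      · have hbv : ee v = 1 := by linear_combination hb1
        rw [hbv] at h1
        have hsq : (ee u + 1)^2 = 0 := by linear_combination h1
        have hav : ee u = -1 := by
          have := (pow_eq_zero_iff two_ne_zero).mp hsq
          linear_combination this
        exact Or.inl ⟨hav, hbv⟩
  · rintro (⟨hu, hv⟩ | ⟨hu, hv⟩ | ⟨hu, hv⟩) <;> rw [hu, hv] at habc ⊢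
    · have hc : ee (-u - v) = -1 := by linear_combination -habc
      rw [hc]; ring
    · have hc : ee (-u - v) = -1 := by linear_combination -habc
      rw [hc]; ring
    · have hc : ee (-u - v) = 1 := by linear_combination habc
      rw [hc]; ring

lemma theta_mem (α β ω : ℤ) (η : ℕ) (hα0 : (α:ℝ) ≠ 0) (hβ0 : (β:ℝ) ≠ 0)
    (δ ε : ℤ) (x : Fin 2 → ℝ) :
    (∃ k k' : ℤ, x = ((2:ℝ)^(η+1) * (α:ℝ) * (β:ℝ))⁻¹ •
        intCast ![2^η*(2*k+δ)*β, (2*k'+ε)*α - (2*k+δ)*ω]) ↔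
    ((∃ k : ℤ, 2*((α:ℝ) * x 0) = 2*(k:ℝ) + (δ:ℝ)) ∧
     (∃ k' : ℤ, 2*((ω:ℝ) * x 0 + 2^η*(β:ℝ) * x 1) = 2*(k':ℝ) + (ε:ℝ))) := by
  have hc : ((2:ℝ)^(η+1) * (α:ℝ) * (β:ℝ)) ≠ 0 :=
    mul_ne_zero (mul_ne_zero (pow_ne_zero _ two_ne_zero) hα0) hβ0
  constructor
  · rintro ⟨k, k', rfl⟩
    constructor
    · refine ⟨k, ?_⟩
      simp only [Pi.smul_apply, smul_eq_mul, intCast, Matrix.cons_val_zero]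
      push_cast
      field_simp
      ring
    · refine ⟨k', ?_⟩
      simp only [Pi.smul_apply, smul_eq_mul, intCast, Matrix.cons_val_zero,
        Matrix.cons_val_one, Matrix.head_cons]
      push_cast
      field_simp
      ring
  · rintro ⟨⟨k, hk⟩, ⟨k', hk'⟩⟩
    refine ⟨k, k', ?_⟩
    rw [funext_iff, Fin.forall_fin_two]
    constructor
    · simp only [Pi.smul_apply, smul_eq_mul, intCast, Matrix.cons_val_zero]
      push_cast
      rw [inv_mul_eq_div, eq_div_iff hc]
      linear_combination ((2:ℝ)^η * (β:ℝ)) * hk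
    · simp only [Pi.smul_apply, smul_eq_mul, intCast, Matrix.cons_val_zero,
        Matrix.cons_val_one, Matrix.head_cons]
      push_cast
      rw [inv_mul_eq_div, eq_div_iff hc]
      linear_combination (α:ℝ) * hk' - (ω:ℝ) * hk

end ZeroSetAux

set_option maxHeartbeats 1000000 in
open ZeroSetAux in
theorem zero_set_of_mask_polynomial
    (α β ω : ℤ) (hα : Odd α) (hβ : Odd β) (η : ℕ)
    (Dt : Finset (Fin 2 → ℤ))
    (hDt : Dt = {![0, 0], ![α, 0], ![ω, 2 ^ η * β], ![-α - ω, -(2 ^ η * β)]}) :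
    {x : Fin 2 → ℝ | maskPoly (Dt.image intCast) x = 0} =
      thetaSet α β ω η 1 ∪ thetaSet α β ω η 2 ∪ thetaSet α β ω η 3 := by
  have hαz : α ≠ 0 := by rintro rfl; exact (Int.not_odd_iff_even.mpr Even.zero) hα
  have hβz : β ≠ 0 := by rintro rfl; exact (Int.not_odd_iff_even.mpr Even.zero) hβ
  have hα0 : (α:ℝ) ≠ 0 := Int.cast_ne_zero.mpr hαz
  have hβ0 : (β:ℝ) ≠ 0 := Int.cast_ne_zero.mpr hβz
  have h2β : (2:ℤ)^η * β ≠ 0 := mul_ne_zero (pow_ne_zero _ two_ne_zero) hβz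
  have hinj : Function.Injective (intCast (n := 2)) := by
    intro a b h
    funext i
    have := congrFun h i
    simpa [intCast] using this
  -- distinctness of the four digits
  have hd12 : (![(0:ℤ),0] : Fin 2 → ℤ) ≠ ![α,0] := by
    intro h; have := congrFun h 0
    simp only [Matrix.cons_val_zero] at this; exact hαz this.symm
  have hd13 : (![(0:ℤ),0] : Fin 2 → ℤ) ≠ ![ω, 2^η*β] := by
    intro h; have := congrFun h 1
    simp only [Matrix.cons_val_one, Matrix.head_cons] at this; exact h2β this.symm
  have hd14 : (![(0:ℤ),0] : Fin 2 → ℤ) ≠ ![-α-ω, -(2^η*β)] := by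
    intro h; have := congrFun h 1
    simp only [Matrix.cons_val_one, Matrix.head_cons, Matrix.cons_val_zero] at this; exact h2β (by linarith)
  have hd23 : (![α,(0:ℤ)] : Fin 2 → ℤ) ≠ ![ω, 2^η*β] := by
    intro h; have := congrFun h 1
    simp only [Matrix.cons_val_one, Matrix.head_cons] at this; exact h2β this.symm
  have hd24 : (![α,(0:ℤ)] : Fin 2 → ℤ) ≠ ![-α-ω, -(2^η*β)] := by
    intro h; have := congrFun h 1
    simp only [Matrix.cons_val_one, Matrix.head_cons, Matrix.cons_val_zero] at this; exact h2β (by linarith)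
  have hd34 : (![ω, (2:ℤ)^η*β] : Fin 2 → ℤ) ≠ ![-α-ω, -(2^η*β)] := by
    intro h; have := congrFun h 1
    simp only [Matrix.cons_val_one, Matrix.head_cons, Matrix.cons_val_zero] at this; exact h2β (by linarith)
  have hcard : (Dt.image intCast).card = 4 := by
    rw [Finset.card_image_of_injective _ hinj, hDt]
    rw [Finset.card_insert_of_notMem (by simp [hd12, hd13, hd14]),
      Finset.card_insert_of_notMem (by simp [hd23, hd24]),
      Finset.card_insert_of_notMem (by simp [hd34]), Finset.card_singleton]
  ext x
  simp only [Set.mem_setOf_eq, Set.mem_union]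
  have e1 : Complex.exp (2 * Real.pi * Complex.I *
      Complex.ofReal (∑ i, intCast ![(0:ℤ),0] i * x i)) = 1 := by
    rw [Fin.sum_univ_two]
    simp [intCast]
  have e2 : Complex.exp (2 * Real.pi * Complex.I *
      Complex.ofReal (∑ i, intCast ![α,(0:ℤ)] i * x i)) = ee ((α:ℝ) * x 0) := by
    rw [ee, Fin.sum_univ_two]
    norm_num [intCast]
  have e3 : Complex.exp (2 * Real.pi * Complex.I *
      Complex.ofReal (∑ i, intCast ![ω, (2:ℤ)^η*β] i * x i))
      = ee ((ω:ℝ) * x 0 + 2^η*(β:ℝ) * x 1) := by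
    rw [ee, Fin.sum_univ_two]
    congr 2
    simp only [intCast, Matrix.cons_val_zero, Matrix.cons_val_one, Matrix.head_cons]
    push_cast
    ring
  have e4 : Complex.exp (2 * Real.pi * Complex.I *
      Complex.ofReal (∑ i, intCast ![-α-ω, -((2:ℤ)^η*β)] i * x i))
      = ee (-((α:ℝ) * x 0) - ((ω:ℝ) * x 0 + 2^η*(β:ℝ) * x 1)) := by
    rw [ee, Fin.sum_univ_two]
    congr 2
    simp only [intCast, Matrix.cons_val_zero, Matrix.cons_val_one, Matrix.head_cons]
    push_cast
    ring
  have hsum4 : (∑ d ∈ Dt.image intCast, Complex.exp (2 * Real.pi * Complex.I *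
      Complex.ofReal (∑ i, d i * x i))) =
      1 + ee ((α:ℝ) * x 0) + ee ((ω:ℝ) * x 0 + 2^η*(β:ℝ) * x 1)
        + ee (-((α:ℝ) * x 0) - ((ω:ℝ) * x 0 + 2^η*(β:ℝ) * x 1)) := by
    rw [Finset.sum_image (fun a _ b _ h => hinj h), hDt,
      Finset.sum_insert (by simp [hd12, hd13, hd14]),
      Finset.sum_insert (by simp [hd23, hd24]),
      Finset.sum_insert (by simp [hd34]), Finset.sum_singleton, e1, e2, e3, e4]
    ring
  have hmask : maskPoly (Dt.image intCast) x =
      (4:ℂ)⁻¹ * (1 + ee ((α:ℝ) * x 0) + ee ((ω:ℝ) * x 0 + 2^η*(β:ℝ) * x 1)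
        + ee (-((α:ℝ) * x 0) - ((ω:ℝ) * x 0 + 2^η*(β:ℝ) * x 1))) := by
    rw [maskPoly, hcard, hsum4]
    norm_num
  have hiff : maskPoly (Dt.image intCast) x = 0 ↔
      (ee ((α:ℝ) * x 0) = -1 ∧ ee ((ω:ℝ) * x 0 + 2^η*(β:ℝ) * x 1) = 1) ∨
      (ee ((α:ℝ) * x 0) = 1 ∧ ee ((ω:ℝ) * x 0 + 2^η*(β:ℝ) * x 1) = -1) ∨
      (ee ((α:ℝ) * x 0) = -1 ∧ ee ((ω:ℝ) * x 0 + 2^η*(β:ℝ) * x 1) = -1) := by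
    rw [hmask, mul_eq_zero, ← key_cases]
    constructor
    · rintro (h | h)
      · norm_num at h
      · exact h
    · exact fun h => Or.inr h
  rw [hiff]
  have hθ1 : x ∈ thetaSet α β ω η 1 ↔
      ((∃ k : ℤ, 2*((α:ℝ) * x 0) = 2*(k:ℝ) + (((1:ℤ)):ℝ)) ∧
       (∃ k' : ℤ, 2*((ω:ℝ) * x 0 + 2^η*(β:ℝ) * x 1) = 2*(k':ℝ) + (((0:ℤ)):ℝ))) :=
    theta_mem α β ω η hα0 hβ0 1 0 x
  have hθ2 : x ∈ thetaSet α β ω η 2 ↔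
      ((∃ k : ℤ, 2*((α:ℝ) * x 0) = 2*(k:ℝ) + (((0:ℤ)):ℝ)) ∧
       (∃ k' : ℤ, 2*((ω:ℝ) * x 0 + 2^η*(β:ℝ) * x 1) = 2*(k':ℝ) + (((1:ℤ)):ℝ))) :=
    theta_mem α β ω η hα0 hβ0 0 1 x
  have hθ3 : x ∈ thetaSet α β ω η 3 ↔
      ((∃ k : ℤ, 2*((α:ℝ) * x 0) = 2*(k:ℝ) + (((1:ℤ)):ℝ)) ∧
       (∃ k' : ℤ, 2*((ω:ℝ) * x 0 + 2^η*(β:ℝ) * x 1) = 2*(k':ℝ) + (((1:ℤ)):ℝ))) :=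
    theta_mem α β ω η hα0 hβ0 1 1 x
  rw [hθ1, hθ2, hθ3,
    ee_eq_neg_one_iff ((α:ℝ) * x 0), ee_eq_one_iff ((α:ℝ) * x 0),
    ee_eq_neg_one_iff ((ω:ℝ) * x 0 + 2^η*(β:ℝ) * x 1),
    ee_eq_one_iff ((ω:ℝ) * x 0 + 2^η*(β:ℝ) * x 1)]
  push_cast
  constructor
  · rintro (h | h | h)
    · exact Or.inl (Or.inl (by simpa using h))
    · exact Or.inl (Or.inr (by simpa using h))
    · exact Or.inr (by simpa using h)
  · rintro ((h | h) | h)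
    · exact Or.inl (by simpa using h)
    · exact Or.inr (Or.inl (by simpa using h))
    · exact Or.inr (Or.inr (by simpa using h))

end
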